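/- Let n ≥ 2 and m ≥ 1 be integers. Consider the following set S of m-diagonals of the regular (nm+2)-gon (labels mod nm+2): the m-snake diagonals D_{2i−1} = {(i−1)m+1, (n−i)m+2} for 1 ≤ i ≤ n/2 and D_{2i} = {im+1, (n−i)m+2} for 1 ≤ i ≤ (n−1)/2, together with the diagonals E_{2i−1} = {im+1, (n+1−i)m+2} for 1 ≤ i ≤ n/2. Then the only arrows of Γ^m_{A_{n−1}} between members of S are: D_{2i−1} → D_{2i} (1 ≤ i ≤ (n−1)/2), D_{2i+1} → D_{2i} (1 ≤ i ≤ (n−2)/2), D_{2i} → E_{2i−1} (1 ≤ i ≤ n/2, when D_{2i} ∈ S), and D_{2i} → E_{2i+1} (1 ≤ i ≤ (n−2)/2). -/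
import Mathlib

/-- An `m`-diagonal of the regular `(n*m+2)`-gon, with vertices labelled by
`ZMod (n*m+2)`: an unordered pair of the form `{i, i+k*m+1}` with `1 ≤ k ≤ n-1`. -/
def IsMDiagonal (n m : ℕ) (p : Sym2 (ZMod (n*m+2))) : Prop :=
  ∃ (i : ZMod (n*m+2)) (k : ℕ), 1 ≤ k ∧ k ≤ n - 1 ∧
    p = s(i, i + ((k*m+1 : ℕ) : ZMod (n*m+2)))

/-- There is an arrow `D → D'` in `Γ^m_{A_{n-1}}`: both `D` and `D'` are
`m`-diagonals, and `D'` is obtained from `D = {a,b}` by replacing the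
endpoint `b` by `b+m`. -/
def HasArrow (n m : ℕ) (D D' : Sym2 (ZMod (n*m+2))) : Prop :=
  IsMDiagonal n m D ∧ IsMDiagonal n m D' ∧
    ∃ a b : ZMod (n*m+2), D = s(a, b) ∧ D' = s(a, b + (m : ZMod (n*m+2)))

/-- The `m`-snake diagonal `D_{2i-1} = {(i-1)m+1, (n-i)m+2}`. -/
def Dodd (n m i : ℕ) : Sym2 (ZMod (n*m+2)) :=
  s((((i-1)*m+1 : ℕ) : ZMod (n*m+2)), (((n-i)*m+2 : ℕ) : ZMod (n*m+2)))

/-- The `m`-snake diagonal `D_{2i} = {im+1, (n-i)m+2}`. -/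
def Deven (n m i : ℕ) : Sym2 (ZMod (n*m+2)) :=
  s(((i*m+1 : ℕ) : ZMod (n*m+2)), (((n-i)*m+2 : ℕ) : ZMod (n*m+2)))

/-- The diagonal `E_{2i-1} = {im+1, (n+1-i)m+2}` of the opposite `m`-snake. -/
def Eodd (n m i : ℕ) : Sym2 (ZMod (n*m+2)) :=
  s(((i*m+1 : ℕ) : ZMod (n*m+2)), (((n+1-i)*m+2 : ℕ) : ZMod (n*m+2)))

/-- The set `S` consisting of the `m`-snake diagonals `D_{2i-1}` (`1 ≤ i ≤ n/2`)
and `D_{2i}` (`1 ≤ i ≤ (n-1)/2`) together with the diagonals `E_{2i-1}`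
(`1 ≤ i ≤ n/2`). -/
def Ssnake (n m : ℕ) : Set (Sym2 (ZMod (n*m+2))) :=
  {p | (∃ i, 1 ≤ i ∧ 2*i ≤ n ∧ p = Dodd n m i) ∨
       (∃ i, 1 ≤ i ∧ 2*i + 1 ≤ n ∧ p = Deven n m i) ∨
       (∃ i, 1 ≤ i ∧ 2*i ≤ n ∧ p = Eodd n m i)}

lemma vstep (n m j j' c : ℕ) (h : j' = j + 1) :
    ((j*m+c : ℕ) : ZMod (n*m+2)) + (m : ZMod (n*m+2)) = ((j'*m+c : ℕ) : ZMod (n*m+2)) := by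
  subst h; push_cast; ring

lemma sym2_arrow' {α : Type*} [Add α] {p1 p2 q1 q2 c P1 P2 : α}
    (hP1 : p1 + c = P1) (hP2 : p2 + c = P2)
    (h : ∃ a b, s(p1, p2) = s(a, b) ∧ s(q1, q2) = s(a, b + c)) :
    (q1 = p1 ∧ q2 = P2) ∨ (q1 = P2 ∧ q2 = p1) ∨ (q1 = p2 ∧ q2 = P1) ∨ (q1 = P1 ∧ q2 = p2) := by
  obtain ⟨a, b, h1, h2⟩ := h
  rw [Sym2.eq_iff] at h1 h2
  rcases h1 with ⟨rfl, rfl⟩ | ⟨rfl, rfl⟩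
  · rw [hP2] at h2; tauto
  · rw [hP1] at h2; tauto

lemma key (n m j k c d : ℕ) (hn : 2 ≤ n) (hm : 1 ≤ m) (hj : j ≤ n) (hk : k ≤ n)
    (hc1 : 1 ≤ c) (hc2 : c ≤ 2) (hd1 : 1 ≤ d) (hd2 : d ≤ 2) :
    ((j*m+c : ℕ) : ZMod (n*m+2)) = ((k*m+d : ℕ) : ZMod (n*m+2)) ↔
      ((j = k ∧ c = d) ∨ (m = 1 ∧ c = 1 ∧ d = 2 ∧ j = k+1) ∨
        (m = 1 ∧ c = 2 ∧ d = 1 ∧ k = j+1)) := by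
  have hjm : j*m ≤ n*m := Nat.mul_le_mul_right m hj
  have hkm : k*m ≤ n*m := Nat.mul_le_mul_right m hk
  rw [ZMod.natCast_eq_natCast_iff]
  unfold Nat.ModEq
  constructor
  · intro h
    have hx : j*m+c = k*m+d := by
      rcases eq_or_lt_of_le (show j*m+c ≤ n*m+2 by omega) with h1 | h1
      · rcases eq_or_lt_of_le (show k*m+d ≤ n*m+2 by omega) with h2 | h2
        · omega
        · rw [h1, Nat.mod_self, Nat.mod_eq_of_lt h2] at h; omega
      · rcases eq_or_lt_of_le (show k*m+d ≤ n*m+2 by omega) with h2 | h2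
        · rw [Nat.mod_eq_of_lt h1, h2, Nat.mod_self] at h; omega
        · rwa [Nat.mod_eq_of_lt h1, Nat.mod_eq_of_lt h2] at h
    rcases Nat.lt_trichotomy j k with hlt | he | hgt
    · obtain ⟨t, rfl⟩ : ∃ t, k = j + (t+1) := ⟨k - j - 1, by omega⟩
      have e : (j + (t+1))*m = j*m + (t+1)*m := by ring
      have h2 : t+1 ≤ (t+1)*m := Nat.le_mul_of_pos_right _ hm
      have ht : t = 0 := by omega
      subst ht
      have e2 : (0+1)*m = m := by ring
      right; right; omega
    · subst he
      exact Or.inl ⟨rfl, by omega⟩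
    · obtain ⟨t, rfl⟩ : ∃ t, j = k + (t+1) := ⟨j - k - 1, by omega⟩
      have e : (k + (t+1))*m = k*m + (t+1)*m := by ring
      have h2 : t+1 ≤ (t+1)*m := Nat.le_mul_of_pos_right _ hm
      have ht : t = 0 := by omega
      subst ht
      have e2 : (0+1)*m = m := by ring
      right; left; omega
  · rintro (⟨rfl, rfl⟩ | ⟨rfl, rfl, rfl, rfl⟩ | ⟨rfl, rfl, rfl, rfl⟩)
    · rfl
    · have e : (k+1)*1+1 = k*1+2 := by ring
      rw [e]
    · have e : (j+1)*1+1 = j*1+2 := by ring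
      rw [e]

lemma key11 (n m j k : ℕ) (hn : 2 ≤ n) (hm : 1 ≤ m) (hj : j ≤ n) (hk : k ≤ n) :
    ((j*m+1 : ℕ) : ZMod (n*m+2)) = ((k*m+1 : ℕ) : ZMod (n*m+2)) ↔ j = k := by
  rw [key n m j k 1 1 hn hm hj hk (by omega) (by omega) (by omega) (by omega)]; omega

lemma key22 (n m j k : ℕ) (hn : 2 ≤ n) (hm : 1 ≤ m) (hj : j ≤ n) (hk : k ≤ n) :
    ((j*m+2 : ℕ) : ZMod (n*m+2)) = ((k*m+2 : ℕ) : ZMod (n*m+2)) ↔ j = k := by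
  rw [key n m j k 2 2 hn hm hj hk (by omega) (by omega) (by omega) (by omega)]; omega

lemma key12 (n m j k : ℕ) (hn : 2 ≤ n) (hm : 1 ≤ m) (hj : j ≤ n) (hk : k ≤ n) :
    ((j*m+1 : ℕ) : ZMod (n*m+2)) = ((k*m+2 : ℕ) : ZMod (n*m+2)) ↔ (m = 1 ∧ j = k+1) := by
  rw [key n m j k 1 2 hn hm hj hk (by omega) (by omega) (by omega) (by omega)]; omega

lemma key21 (n m j k : ℕ) (hn : 2 ≤ n) (hm : 1 ≤ m) (hj : j ≤ n) (hk : k ≤ n) :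
    ((j*m+2 : ℕ) : ZMod (n*m+2)) = ((k*m+1 : ℕ) : ZMod (n*m+2)) ↔ (m = 1 ∧ k = j+1) := by
  rw [key n m j k 2 1 hn hm hj hk (by omega) (by omega) (by omega) (by omega)]; omega

lemma key2 (n m k d : ℕ) (hn : 2 ≤ n) (hm : 1 ≤ m) (hk : k ≤ n) (hd1 : 1 ≤ d) (hd2 : d ≤ 2) :
    (((n+1)*m+2 : ℕ) : ZMod (n*m+2)) = ((k*m+d : ℕ) : ZMod (n*m+2)) ↔ (k = 0 ∧ m = d) := by
  have hkm : k*m ≤ n*m := Nat.mul_le_mul_right m hk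
  have hm2 : m ≤ n*m := Nat.le_mul_of_pos_left m (by omega)
  rw [ZMod.natCast_eq_natCast_iff]
  unfold Nat.ModEq
  have h1 : ((n+1)*m+2) % (n*m+2) = m := by
    have e : (n+1)*m+2 = m + 1*(n*m+2) := by ring
    rw [e, Nat.add_mul_mod_self_right, Nat.mod_eq_of_lt (by omega)]
  rw [h1]
  constructor
  · intro h
    rcases eq_or_lt_of_le (show k*m+d ≤ n*m+2 by omega) with h2 | h2
    · rw [h2, Nat.mod_self] at h; omega
    · rw [Nat.mod_eq_of_lt h2] at h
      rcases Nat.eq_zero_or_pos k with rfl | hk0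
      · refine ⟨rfl, ?_⟩
        omega
      · exfalso
        have : m ≤ k*m := Nat.le_mul_of_pos_left m hk0
        omega
  · rintro ⟨rfl, rfl⟩
    have e : 0*m+m = m := by ring
    rw [e, Nat.mod_eq_of_lt (by omega)]

lemma key2d1 (n m k : ℕ) (hn : 2 ≤ n) (hm : 1 ≤ m) (hk : k ≤ n) :
    (((n+1)*m+2 : ℕ) : ZMod (n*m+2)) = ((k*m+1 : ℕ) : ZMod (n*m+2)) ↔ (k = 0 ∧ m = 1) :=
  key2 n m k 1 hn hm hk (by omega) (by omega)

lemma key2d2 (n m k : ℕ) (hn : 2 ≤ n) (hm : 1 ≤ m) (hk : k ≤ n) :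
    (((n+1)*m+2 : ℕ) : ZMod (n*m+2)) = ((k*m+2 : ℕ) : ZMod (n*m+2)) ↔ (k = 0 ∧ m = 2) :=
  key2 n m k 2 hn hm hk (by omega) (by omega)

lemma isdiag_mk (n m x y k : ℕ) (hk1 : 1 ≤ k) (hk2 : k ≤ n-1) (hy : y = x + (k*m+1)) :
    IsMDiagonal n m s((x : ZMod (n*m+2)), (y : ZMod (n*m+2))) :=
  ⟨(x : ZMod (n*m+2)), k, hk1, hk2, by rw [hy, Nat.cast_add]⟩

lemma isdiag_Dodd (n m i : ℕ) (hn : 2 ≤ n) (hm : 1 ≤ m) (hi1 : 1 ≤ i) (hi2 : 2*i ≤ n) :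
    IsMDiagonal n m (Dodd n m i) := by
  have e : (i-1) + (n-2*i+1) = n-i := by omega
  refine isdiag_mk n m ((i-1)*m+1) ((n-i)*m+2) (n-2*i+1) (by omega) (by omega) ?_
  rw [← e, Nat.add_mul]
  omega

lemma isdiag_Deven (n m i : ℕ) (hn : 2 ≤ n) (hm : 1 ≤ m) (hi1 : 1 ≤ i) (hi2 : 2*i+1 ≤ n) :
    IsMDiagonal n m (Deven n m i) := by
  have e : i + (n-2*i) = n-i := by omega
  refine isdiag_mk n m (i*m+1) ((n-i)*m+2) (n-2*i) (by omega) (by omega) ?_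
  rw [← e, Nat.add_mul]
  omega

lemma isdiag_Eodd (n m i : ℕ) (hn : 2 ≤ n) (hm : 1 ≤ m) (hi1 : 1 ≤ i) (hi2 : 2*i ≤ n) :
    IsMDiagonal n m (Eodd n m i) := by
  have e : i + (n+1-2*i) = n+1-i := by omega
  refine isdiag_mk n m (i*m+1) ((n+1-i)*m+2) (n+1-2*i) (by omega) (by omega) ?_
  rw [← e, Nat.add_mul]
  omega

lemma Deven_mem (n m i : ℕ) (hn : 2 ≤ n) (hm : 1 ≤ m) (hi1 : 1 ≤ i) (hi2 : 2*i ≤ n)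
    (h : Deven n m i ∈ Ssnake n m) : 2*i+1 ≤ n := by
  simp only [Ssnake, Set.mem_setOf_eq] at h
  rcases h with ⟨j, hj1, hj2, hf⟩ | ⟨j, hj1, hj2, hf⟩ | ⟨j, hj1, hj2, hf⟩
  · simp only [Deven, Dodd, Sym2.eq_iff] at hf
    rcases hf with ⟨e1, e2⟩ | ⟨e1, e2⟩
    · rw [key11 n m i (j-1) hn hm (by omega) (by omega)] at e1
      rw [key22 n m (n-i) (n-j) hn hm (by omega) (by omega)] at e2
      omega
    · rw [key12 n m i (n-j) hn hm (by omega) (by omega)] at e1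
      rw [key21 n m (n-i) (j-1) hn hm (by omega) (by omega)] at e2
      omega
  · simp only [Deven, Sym2.eq_iff] at hf
    rcases hf with ⟨e1, e2⟩ | ⟨e1, e2⟩
    · rw [key11 n m i j hn hm (by omega) (by omega)] at e1
      omega
    · rw [key12 n m i (n-j) hn hm (by omega) (by omega)] at e1
      rw [key21 n m (n-i) j hn hm (by omega) (by omega)] at e2
      omega
  · simp only [Deven, Eodd, Sym2.eq_iff] at hf
    rcases hf with ⟨e1, e2⟩ | ⟨e1, e2⟩
    · rw [key11 n m i j hn hm (by omega) (by omega)] at e1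
      rw [key22 n m (n-i) (n+1-j) hn hm (by omega) (by omega)] at e2
      omega
    · rw [key12 n m i (n+1-j) hn hm (by omega) (by omega)] at e1
      rw [key21 n m (n-i) j hn hm (by omega) (by omega)] at e2
      omega

theorem stmt5 (n m : ℕ) (hn : 2 ≤ n) (hm : 1 ≤ m)
    (D E : Sym2 (ZMod (n*m+2))) (hD : D ∈ Ssnake n m) (hE : E ∈ Ssnake n m) :
    HasArrow n m D E ↔
      ((∃ i, 1 ≤ i ∧ 2*i + 1 ≤ n ∧ D = Dodd n m i ∧ E = Deven n m i) ∨
       (∃ i, 1 ≤ i ∧ 2*i + 2 ≤ n ∧ D = Dodd n m (i+1) ∧ E = Deven n m i) ∨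
       (∃ i, 1 ≤ i ∧ 2*i ≤ n ∧ Deven n m i ∈ Ssnake n m ∧
          D = Deven n m i ∧ E = Eodd n m i) ∨
       (∃ i, 1 ≤ i ∧ 2*i + 2 ≤ n ∧ D = Deven n m i ∧ E = Eodd n m (i+1))) := by
  constructor
  · intro h
    obtain ⟨-, -, hab⟩ := h
    have hDm := hD
    simp only [Ssnake, Set.mem_setOf_eq] at hD hE
    rcases hD with ⟨i, hi1, hi2, hDf⟩ | ⟨i, hi1, hi2, hDf⟩ | ⟨i, hi1, hi2, hDf⟩ <;>
      rcases hE with ⟨j, hj1, hj2, hEf⟩ | ⟨j, hj1, hj2, hEf⟩ | ⟨j, hj1, hj2, hEf⟩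
    · -- D = Dodd i, E = Dodd j
      rw [hDf, hEf] at hab
      simp only [Dodd, Deven, Eodd] at hab
      have H := sym2_arrow' (vstep n m (i-1) i 1 (by omega)) (vstep n m (n-i) (n-i+1) 2 (by omega)) hab
      rcases H with ⟨h1, h2⟩ | ⟨h1, h2⟩ | ⟨h1, h2⟩ | ⟨h1, h2⟩
      · rw [key11 n m (j-1) (i-1) hn hm (by omega) (by omega)] at h1
        rw [key22 n m (n-j) (n-i+1) hn hm (by omega) (by omega)] at h2
        omega
      · rw [key12 n m (j-1) (n-i+1) hn hm (by omega) (by omega)] at h1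
        rw [key21 n m (n-j) (i-1) hn hm (by omega) (by omega)] at h2
        omega
      · rw [key12 n m (j-1) (n-i) hn hm (by omega) (by omega)] at h1
        rw [key21 n m (n-j) i hn hm (by omega) (by omega)] at h2
        omega
      · rw [key11 n m (j-1) i hn hm (by omega) (by omega)] at h1
        rw [key22 n m (n-j) (n-i) hn hm (by omega) (by omega)] at h2
        omega
    · -- D = Dodd i, E = Deven j
      rw [hDf, hEf] at hab
      simp only [Dodd, Deven, Eodd] at hab
      have H := sym2_arrow' (vstep n m (i-1) i 1 (by omega)) (vstep n m (n-i) (n-i+1) 2 (by omega)) hab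
      rcases H with ⟨h1, h2⟩ | ⟨h1, h2⟩ | ⟨h1, h2⟩ | ⟨h1, h2⟩
      · rw [key11 n m j (i-1) hn hm (by omega) (by omega)] at h1
        rw [key22 n m (n-j) (n-i+1) hn hm (by omega) (by omega)] at h2
        obtain rfl : i = j + 1 := by omega
        exact Or.inr (Or.inl ⟨j, hj1, by omega, hDf, hEf⟩)
      · rw [key12 n m j (n-i+1) hn hm (by omega) (by omega)] at h1
        rw [key21 n m (n-j) (i-1) hn hm (by omega) (by omega)] at h2
        omega
      · rw [key12 n m j (n-i) hn hm (by omega) (by omega)] at h1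
        rw [key21 n m (n-j) i hn hm (by omega) (by omega)] at h2
        omega
      · rw [key11 n m j i hn hm (by omega) (by omega)] at h1
        rw [key22 n m (n-j) (n-i) hn hm (by omega) (by omega)] at h2
        have hij : i = j := by omega
        exact Or.inl ⟨j, hj1, hj2, by rw [hDf, hij], hEf⟩
    · -- D = Dodd i, E = Eodd j
      rw [hDf, hEf] at hab
      simp only [Dodd, Deven, Eodd] at hab
      have H := sym2_arrow' (vstep n m (i-1) i 1 (by omega)) (vstep n m (n-i) (n-i+1) 2 (by omega)) hab
      rcases H with ⟨h1, h2⟩ | ⟨h1, h2⟩ | ⟨h1, h2⟩ | ⟨h1, h2⟩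
      · rw [key11 n m j (i-1) hn hm (by omega) (by omega)] at h1
        rw [key22 n m (n+1-j) (n-i+1) hn hm (by omega) (by omega)] at h2
        omega
      · rw [key12 n m j (n-i+1) hn hm (by omega) (by omega)] at h1
        rw [key21 n m (n+1-j) (i-1) hn hm (by omega) (by omega)] at h2
        omega
      · rw [key12 n m j (n-i) hn hm (by omega) (by omega)] at h1
        rw [key21 n m (n+1-j) i hn hm (by omega) (by omega)] at h2
        omega
      · rw [key11 n m j i hn hm (by omega) (by omega)] at h1
        rw [key22 n m (n+1-j) (n-i) hn hm (by omega) (by omega)] at h2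
        omega
    · -- D = Deven i, E = Dodd j
      rw [hDf, hEf] at hab
      simp only [Dodd, Deven, Eodd] at hab
      have H := sym2_arrow' (vstep n m i (i+1) 1 (by omega)) (vstep n m (n-i) (n-i+1) 2 (by omega)) hab
      rcases H with ⟨h1, h2⟩ | ⟨h1, h2⟩ | ⟨h1, h2⟩ | ⟨h1, h2⟩
      · rw [key11 n m (j-1) i hn hm (by omega) (by omega)] at h1
        rw [key22 n m (n-j) (n-i+1) hn hm (by omega) (by omega)] at h2
        omega
      · rw [key12 n m (j-1) (n-i+1) hn hm (by omega) (by omega)] at h1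
        rw [key21 n m (n-j) i hn hm (by omega) (by omega)] at h2
        omega
      · rw [key12 n m (j-1) (n-i) hn hm (by omega) (by omega)] at h1
        rw [key21 n m (n-j) (i+1) hn hm (by omega) (by omega)] at h2
        omega
      · rw [key11 n m (j-1) (i+1) hn hm (by omega) (by omega)] at h1
        rw [key22 n m (n-j) (n-i) hn hm (by omega) (by omega)] at h2
        omega
    · -- D = Deven i, E = Deven j
      rw [hDf, hEf] at hab
      simp only [Dodd, Deven, Eodd] at hab
      have H := sym2_arrow' (vstep n m i (i+1) 1 (by omega)) (vstep n m (n-i) (n-i+1) 2 (by omega)) hab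
      rcases H with ⟨h1, h2⟩ | ⟨h1, h2⟩ | ⟨h1, h2⟩ | ⟨h1, h2⟩
      · rw [key11 n m j i hn hm (by omega) (by omega)] at h1
        rw [key22 n m (n-j) (n-i+1) hn hm (by omega) (by omega)] at h2
        omega
      · rw [key12 n m j (n-i+1) hn hm (by omega) (by omega)] at h1
        rw [key21 n m (n-j) i hn hm (by omega) (by omega)] at h2
        omega
      · rw [key12 n m j (n-i) hn hm (by omega) (by omega)] at h1
        rw [key21 n m (n-j) (i+1) hn hm (by omega) (by omega)] at h2
        omega
      · rw [key11 n m j (i+1) hn hm (by omega) (by omega)] at h1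
        rw [key22 n m (n-j) (n-i) hn hm (by omega) (by omega)] at h2
        omega
    · -- D = Deven i, E = Eodd j
      rw [hDf, hEf] at hab
      simp only [Dodd, Deven, Eodd] at hab
      have H := sym2_arrow' (vstep n m i (i+1) 1 (by omega)) (vstep n m (n-i) (n-i+1) 2 (by omega)) hab
      rcases H with ⟨h1, h2⟩ | ⟨h1, h2⟩ | ⟨h1, h2⟩ | ⟨h1, h2⟩
      · rw [key11 n m j i hn hm (by omega) (by omega)] at h1
        rw [key22 n m (n+1-j) (n-i+1) hn hm (by omega) (by omega)] at h2
        have hij : i = j := by omega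
        exact Or.inr (Or.inr (Or.inl ⟨j, hj1, hj2, by rw [← hij, ← hDf]; exact hDm, by rw [hDf, hij], hEf⟩))
      · rw [key12 n m j (n-i+1) hn hm (by omega) (by omega)] at h1
        rw [key21 n m (n+1-j) i hn hm (by omega) (by omega)] at h2
        omega
      · rw [key12 n m j (n-i) hn hm (by omega) (by omega)] at h1
        rw [key21 n m (n+1-j) (i+1) hn hm (by omega) (by omega)] at h2
        omega
      · rw [key11 n m j (i+1) hn hm (by omega) (by omega)] at h1
        rw [key22 n m (n+1-j) (n-i) hn hm (by omega) (by omega)] at h2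
        obtain rfl : j = i + 1 := by omega
        exact Or.inr (Or.inr (Or.inr ⟨i, hi1, by omega, hDf, hEf⟩))
    · -- D = Eodd i, E = Dodd j
      rw [hDf, hEf] at hab
      simp only [Dodd, Deven, Eodd] at hab
      rcases Nat.lt_or_ge i 2 with hi' | hi'
      · obtain rfl : i = 1 := by omega
        have H := sym2_arrow' (vstep n m 1 2 1 (by omega)) (vstep n m (n+1-1) (n+1) 2 (by omega)) hab
        rcases H with ⟨h1, h2⟩ | ⟨h1, h2⟩ | ⟨h1, h2⟩ | ⟨h1, h2⟩
        · rw [key11 n m (j-1) 1 hn hm (by omega) (by omega)] at h1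
          rw [eq_comm, key2d2 n m (n-j) hn hm (by omega)] at h2
          omega
        · rw [eq_comm, key2d1 n m (j-1) hn hm (by omega)] at h1
          rw [key21 n m (n-j) 1 hn hm (by omega) (by omega)] at h2
          omega
        · rw [key12 n m (j-1) (n+1-1) hn hm (by omega) (by omega)] at h1
          rw [key21 n m (n-j) 2 hn hm (by omega) (by omega)] at h2
          omega
        · rw [key11 n m (j-1) 2 hn hm (by omega) (by omega)] at h1
          rw [key22 n m (n-j) (n+1-1) hn hm (by omega) (by omega)] at h2
          omega
      · have H := sym2_arrow' (vstep n m i (i+1) 1 (by omega)) (vstep n m (n+1-i) (n+2-i) 2 (by omega)) hab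
        rcases H with ⟨h1, h2⟩ | ⟨h1, h2⟩ | ⟨h1, h2⟩ | ⟨h1, h2⟩
        · rw [key11 n m (j-1) i hn hm (by omega) (by omega)] at h1
          rw [key22 n m (n-j) (n+2-i) hn hm (by omega) (by omega)] at h2
          omega
        · rw [key12 n m (j-1) (n+2-i) hn hm (by omega) (by omega)] at h1
          rw [key21 n m (n-j) i hn hm (by omega) (by omega)] at h2
          omega
        · rw [key12 n m (j-1) (n+1-i) hn hm (by omega) (by omega)] at h1
          rw [key21 n m (n-j) (i+1) hn hm (by omega) (by omega)] at h2
          omega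
        · rw [key11 n m (j-1) (i+1) hn hm (by omega) (by omega)] at h1
          rw [key22 n m (n-j) (n+1-i) hn hm (by omega) (by omega)] at h2
          omega
    · -- D = Eodd i, E = Deven j
      rw [hDf, hEf] at hab
      simp only [Dodd, Deven, Eodd] at hab
      rcases Nat.lt_or_ge i 2 with hi' | hi'
      · obtain rfl : i = 1 := by omega
        have H := sym2_arrow' (vstep n m 1 2 1 (by omega)) (vstep n m (n+1-1) (n+1) 2 (by omega)) hab
        rcases H with ⟨h1, h2⟩ | ⟨h1, h2⟩ | ⟨h1, h2⟩ | ⟨h1, h2⟩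
        · rw [key11 n m j 1 hn hm (by omega) (by omega)] at h1
          rw [eq_comm, key2d2 n m (n-j) hn hm (by omega)] at h2
          omega
        · rw [eq_comm, key2d1 n m j hn hm (by omega)] at h1
          rw [key21 n m (n-j) 1 hn hm (by omega) (by omega)] at h2
          omega
        · rw [key12 n m j (n+1-1) hn hm (by omega) (by omega)] at h1
          rw [key21 n m (n-j) 2 hn hm (by omega) (by omega)] at h2
          omega
        · rw [key11 n m j 2 hn hm (by omega) (by omega)] at h1
          rw [key22 n m (n-j) (n+1-1) hn hm (by omega) (by omega)] at h2
          omega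
      · have H := sym2_arrow' (vstep n m i (i+1) 1 (by omega)) (vstep n m (n+1-i) (n+2-i) 2 (by omega)) hab
        rcases H with ⟨h1, h2⟩ | ⟨h1, h2⟩ | ⟨h1, h2⟩ | ⟨h1, h2⟩
        · rw [key11 n m j i hn hm (by omega) (by omega)] at h1
          rw [key22 n m (n-j) (n+2-i) hn hm (by omega) (by omega)] at h2
          omega
        · rw [key12 n m j (n+2-i) hn hm (by omega) (by omega)] at h1
          rw [key21 n m (n-j) i hn hm (by omega) (by omega)] at h2
          omega
        · rw [key12 n m j (n+1-i) hn hm (by omega) (by omega)] at h1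
          rw [key21 n m (n-j) (i+1) hn hm (by omega) (by omega)] at h2
          omega
        · rw [key11 n m j (i+1) hn hm (by omega) (by omega)] at h1
          rw [key22 n m (n-j) (n+1-i) hn hm (by omega) (by omega)] at h2
          omega
    · -- D = Eodd i, E = Eodd j
      rw [hDf, hEf] at hab
      simp only [Dodd, Deven, Eodd] at hab
      rcases Nat.lt_or_ge i 2 with hi' | hi'
      · obtain rfl : i = 1 := by omega
        have H := sym2_arrow' (vstep n m 1 2 1 (by omega)) (vstep n m (n+1-1) (n+1) 2 (by omega)) hab
        rcases H with ⟨h1, h2⟩ | ⟨h1, h2⟩ | ⟨h1, h2⟩ | ⟨h1, h2⟩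
        · rw [key11 n m j 1 hn hm (by omega) (by omega)] at h1
          rw [eq_comm, key2d2 n m (n+1-j) hn hm (by omega)] at h2
          omega
        · rw [eq_comm, key2d1 n m j hn hm (by omega)] at h1
          rw [key21 n m (n+1-j) 1 hn hm (by omega) (by omega)] at h2
          omega
        · rw [key12 n m j (n+1-1) hn hm (by omega) (by omega)] at h1
          rw [key21 n m (n+1-j) 2 hn hm (by omega) (by omega)] at h2
          omega
        · rw [key11 n m j 2 hn hm (by omega) (by omega)] at h1
          rw [key22 n m (n+1-j) (n+1-1) hn hm (by omega) (by omega)] at h2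
          omega
      · have H := sym2_arrow' (vstep n m i (i+1) 1 (by omega)) (vstep n m (n+1-i) (n+2-i) 2 (by omega)) hab
        rcases H with ⟨h1, h2⟩ | ⟨h1, h2⟩ | ⟨h1, h2⟩ | ⟨h1, h2⟩
        · rw [key11 n m j i hn hm (by omega) (by omega)] at h1
          rw [key22 n m (n+1-j) (n+2-i) hn hm (by omega) (by omega)] at h2
          omega
        · rw [key12 n m j (n+2-i) hn hm (by omega) (by omega)] at h1
          rw [key21 n m (n+1-j) i hn hm (by omega) (by omega)] at h2
          omega
        · rw [key12 n m j (n+1-i) hn hm (by omega) (by omega)] at h1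
          rw [key21 n m (n+1-j) (i+1) hn hm (by omega) (by omega)] at h2
          omega
        · rw [key11 n m j (i+1) hn hm (by omega) (by omega)] at h1
          rw [key22 n m (n+1-j) (n+1-i) hn hm (by omega) (by omega)] at h2
          omega
  · rintro (⟨i, hi1, hi2, rfl, rfl⟩ | ⟨i, hi1, hi2, rfl, rfl⟩ |
      ⟨i, hi1, hi2, hDS, rfl, rfl⟩ | ⟨i, hi1, hi2, rfl, rfl⟩)
    · refine ⟨isdiag_Dodd n m i hn hm hi1 (by omega), isdiag_Deven n m i hn hm hi1 hi2,
        (((n-i)*m+2 : ℕ) : ZMod (n*m+2)), (((i-1)*m+1 : ℕ) : ZMod (n*m+2)), ?_, ?_⟩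
      · exact Sym2.eq_swap
      · rw [vstep n m (i-1) i 1 (by omega)]
        exact Sym2.eq_swap
    · refine ⟨isdiag_Dodd n m (i+1) hn hm (by omega) (by omega),
        isdiag_Deven n m i hn hm hi1 (by omega),
        ((((i+1)-1)*m+1 : ℕ) : ZMod (n*m+2)), (((n-(i+1))*m+2 : ℕ) : ZMod (n*m+2)), rfl, ?_⟩
      rw [vstep n m (n-(i+1)) (n-i) 2 (by omega)]
      simp only [Deven, Nat.add_sub_cancel]
    · have h2i : 2*i+1 ≤ n := Deven_mem n m i hn hm hi1 hi2 hDS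
      refine ⟨isdiag_Deven n m i hn hm hi1 h2i, isdiag_Eodd n m i hn hm hi1 hi2,
        ((i*m+1 : ℕ) : ZMod (n*m+2)), (((n-i)*m+2 : ℕ) : ZMod (n*m+2)), rfl, ?_⟩
      rw [vstep n m (n-i) (n+1-i) 2 (by omega)]
      rfl
    · refine ⟨isdiag_Deven n m i hn hm hi1 (by omega),
        isdiag_Eodd n m (i+1) hn hm (by omega) (by omega),
        (((n-i)*m+2 : ℕ) : ZMod (n*m+2)), ((i*m+1 : ℕ) : ZMod (n*m+2)), Sym2.eq_swap, ?_⟩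
      rw [vstep n m i (i+1) 1 rfl]
      simp only [Eodd]
      rw [show n+1-(i+1) = n-i by omega]
      exact Sym2.eq_swap
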